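/- Let d be an odd positive integer, g a positive integer all of whose prime factors divide d, r a positive integer with gcd(r,d) = 1, P a prime, and t an integer with gcd(t,d) = 1 and d² ∣ r²t − 4P. Then Σ_{a mod d²g, a ≡ t (mod d²)} (a | g)·((r²a − 4P)/d² | g) equals φ(g) if g is a perfect square, and equals 0 otherwise. (Here the sum runs over the g residues a modulo d²g congruent to t modulo d²; for each such a, d² divides r²a − 4P so the second argument is an integer.) -/

import Mathlib

open Finset

/-- Jacobi symbol only depends on the argument modulo each prime divisor. -/
lemma jacobi_congr_aux {a b : ℤ} {g : ℕ}
    (h : ∀ p : ℕ, p.Prime → p ∣ g → (p : ℤ) ∣ a - b) :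
    jacobiSym a g = jacobiSym b g := by
  unfold jacobiSym
  apply congr_arg List.prod
  apply List.pmap_congr_left
  rintro p hp _ h₂
  haveI : Fact p.Prime := ⟨h₂⟩
  simp only [legendreSym]
  congr 1
  rw [ZMod.intCast_eq_intCast_iff]
  exact Int.modEq_iff_dvd.mpr (dvd_sub_comm.mp (h p h₂ (Nat.dvd_of_mem_primeFactorsList hp)))

/-- Casting sums over `range g` to sums over `ZMod g`. -/
lemma sum_range_cast {g : ℕ} [NeZero g] (G : ZMod g → ℤ) :
    ∑ v ∈ Finset.range g, G ((v : ℕ) : ZMod g) = ∑ x : ZMod g, G x := by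
  refine Finset.sum_nbij' (fun v => ((v : ℕ) : ZMod g)) (fun x => x.val) ?_ ?_ ?_ ?_ ?_
  · intro v hv; exact Finset.mem_univ _
  · intro x hx; exact Finset.mem_range.mpr (ZMod.val_lt x)
  · intro v hv; exact ZMod.val_cast_of_lt (Finset.mem_range.mp hv)
  · intro x hx; exact ZMod.natCast_rightInverse x
  · intro v hv; rfl

/-- Affine reindexing of a sum over `ZMod g`. -/
lemma sum_affine {g : ℕ} [NeZero g] (u : (ZMod g)ˣ) (c : ZMod g) (F : ZMod g → ℤ) :
    ∑ x : ZMod g, F (c + (u : ZMod g) * x) = ∑ x : ZMod g, F x := by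
  apply Fintype.sum_bijective (fun x : ZMod g => c + (u : ZMod g) * x)
  · exact (Equiv.addLeft c).bijective.comp (Units.mulLeft_bijective u)
  · intro x; rfl

lemma jacobi_val_cast {g : ℕ} [NeZero g] (a : ℤ) :
    jacobiSym a g = jacobiSym (((a : ZMod g).val : ℤ)) g := by
  apply jacobiSym.mod_left'
  rw [ZMod.val_intCast, Int.emod_emod_of_dvd _ dvd_rfl]

/-- If `g` is a square and `a` is coprime to `g`, the Jacobi symbol is 1. -/
lemma jacobi_eq_one_of_isSquare {g : ℕ} (hg : 0 < g) (hsq : IsSquare g) {a : ℤ}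
    (ha : Int.gcd a g = 1) : jacobiSym a g = 1 := by
  obtain ⟨m, rfl⟩ := hsq
  have hm : m ≠ 0 := by rintro rfl; simp at hg
  have ham : Int.gcd a m = 1 := Nat.Coprime.coprime_dvd_right ⟨m, rfl⟩ ha
  rw [jacobiSym.mul_right' a hm hm, ← sq, jacobiSym.sq_one ham]

/-- The sum of `J(x | g)` over `x : ZMod g` when `g` is a square. -/
lemma sum_jacobi_of_isSquare {g : ℕ} [NeZero g] (hsq : IsSquare g) :
    ∑ x : ZMod g, jacobiSym ((x.val : ℤ)) g = (Nat.totient g : ℤ) := by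
  have hg : 0 < g := Nat.pos_of_ne_zero (NeZero.ne g)
  have key : ∀ x : ZMod g, jacobiSym ((x.val : ℤ)) g
      = if Nat.Coprime x.val g then (1 : ℤ) else 0 := by
    intro x
    by_cases h : Nat.Coprime x.val g
    · rw [if_pos h]
      exact jacobi_eq_one_of_isSquare hg hsq (by rw [Int.gcd_natCast_natCast]; exact h)
    · rw [if_neg h]
      exact jacobiSym.eq_zero_iff_not_coprime.mpr
        (by rw [Int.gcd_natCast_natCast]; exact h)
  rw [Finset.sum_congr rfl fun x _ => key x]
  rw [← sum_range_cast (fun x : ZMod g => if Nat.Coprime x.val g then (1 : ℤ) else 0)]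
  have : ∀ v ∈ Finset.range g,
      (if Nat.Coprime (((v : ℕ) : ZMod g)).val g then (1 : ℤ) else 0)
        = if g.Coprime v then (1 : ℤ) else 0 := by
    intro v hv
    rw [ZMod.val_cast_of_lt (Finset.mem_range.mp hv)]
    simp [Nat.coprime_comm]
  rw [Finset.sum_congr rfl this, Finset.sum_boole]
  norm_cast

/-- If there is `k` coprime to `g` with `J(k|g) = -1`, the full sum vanishes. -/
lemma sum_jacobi_eq_zero_of_exists {g : ℕ} [NeZero g] (k : ℕ)
    (hk : Nat.Coprime k g) (hJ : jacobiSym (k : ℤ) g = -1) :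
    ∑ x : ZMod g, jacobiSym ((x.val : ℤ)) g = 0 := by
  set S := ∑ x : ZMod g, jacobiSym ((x.val : ℤ)) g with hS
  set u := ZMod.unitOfCoprime k hk with hu
  have key : ∀ x : ZMod g, jacobiSym ((k : ℤ)) g * jacobiSym ((x.val : ℤ)) g
      = jacobiSym ((((u : ZMod g) * x).val : ℤ)) g := by
    intro x
    rw [← jacobiSym.mul_left]
    apply jacobiSym.mod_left'
    refine (ZMod.intCast_eq_intCast_iff' _ _ _).mp ?_
    push_cast
    rw [ZMod.natCast_rightInverse x, ZMod.natCast_rightInverse ((u : ZMod g) * x)]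
    rw [hu, ZMod.coe_unitOfCoprime]
  have h1 : -S = S := by
    calc -S = jacobiSym (k : ℤ) g * S := by rw [hJ]; ring
    _ = ∑ x : ZMod g, jacobiSym ((k : ℤ)) g * jacobiSym ((x.val : ℤ)) g := by
        rw [Finset.mul_sum]
    _ = ∑ x : ZMod g, jacobiSym ((((u : ZMod g) * x).val : ℤ)) g :=
        Finset.sum_congr rfl fun x _ => key x
    _ = S := by
        rw [hS]
        exact Fintype.sum_bijective (fun x : ZMod g => (u : ZMod g) * x)
          (Units.mulLeft_bijective u) _ _ (fun x => rfl)
  linarith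

/-- A non-square has a prime factor with odd multiplicity. -/
lemma exists_odd_factorization {g : ℕ} (hg : 0 < g) (hns : ¬IsSquare g) :
    ∃ p : ℕ, p.Prime ∧ p ∣ g ∧ Odd (g.factorization p) := by
  obtain ⟨a, b, hab, hsf⟩ := Nat.sq_mul_squarefree g
  have ha0 : a ≠ 0 := by rintro rfl; simp at hab; omega
  have hb0 : b ≠ 0 := by rintro rfl; simp at hab; omega
  have ha1 : a ≠ 1 := by
    rintro rfl
    exact hns ⟨b, by rw [← hab]; ring⟩
  obtain ⟨p, pp, hpa⟩ := Nat.exists_prime_and_dvd ha1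
  refine ⟨p, pp, ?_, ?_⟩
  · exact dvd_trans hpa (Dvd.intro_left _ hab)
  · have : g.factorization p = 2 * b.factorization p + a.factorization p := by
      rw [← hab, Nat.factorization_mul (pow_ne_zero 2 hb0) ha0,
        Nat.factorization_pow]
      simp
    rw [this]
    have h1 : a.factorization p = 1 := by
      have hle : a.factorization p ≤ 1 := (Nat.squarefree_iff_factorization_le_one ha0).mp hsf p
      have hge : 1 ≤ a.factorization p :=
        (Nat.Prime.factorization_pos_of_dvd pp ha0 hpa)
      omega
    rw [h1]
    exact ⟨b.factorization p, by ring⟩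

/-- For odd non-square `g`, construct `k` coprime to `g` with `J(k|g) = -1`. -/
lemma exists_jacobi_neg_one {g : ℕ} (hg : 0 < g) (hodd : Odd g) (hns : ¬IsSquare g) :
    ∃ k : ℕ, Nat.Coprime k g ∧ jacobiSym (k : ℤ) g = -1 := by
  obtain ⟨p, pp, hpg, hoddmult⟩ := exists_odd_factorization hg hns
  haveI : Fact p.Prime := ⟨pp⟩
  have hp2 : p ≠ 2 := by
    rintro rfl
    exact (Nat.not_even_iff_odd.mpr hodd) ((even_iff_two_dvd).mpr hpg)
  set e := g.factorization p with he
  set m := g / p ^ e with hm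
  have hgm : p ^ e * m = g := Nat.ordProj_mul_ordCompl_eq_self g p
  have hpm : ¬ p ∣ m := Nat.not_dvd_ordCompl pp hg.ne'
  have hm0 : m ≠ 0 := by
    intro h0; rw [h0, mul_zero] at hgm; exact hg.ne' hgm.symm
  have he0 : e ≠ 0 := by
    rcases hoddmult with ⟨j, hj⟩; omega
  -- nonresidue mod p
  have hchar : ringChar (ZMod p) ≠ 2 := by
    rw [ZMod.ringChar_zmod_n]; exact hp2
  obtain ⟨a, hA⟩ := quadraticChar_exists_neg_one hchar
  have ha0 : a ≠ 0 := by
    rintro rfl; rw [quadraticChar_zero] at hA; norm_num at hA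
  set n0 := a.val with hn0
  have hn0a : ((n0 : ℕ) : ZMod p) = a := ZMod.natCast_rightInverse a
  have hcop : Nat.Coprime (p ^ e) m :=
    (Nat.coprime_ordCompl pp hg.ne').pow_left e
  obtain ⟨k, hk1, hk2⟩ := Nat.chineseRemainder hcop n0 1
  -- k mod p equals a
  have hkp : ((k : ℕ) : ZMod p) = a := by
    have : k ≡ n0 [MOD p] := hk1.of_dvd (dvd_pow_self p he0)
    rw [← hn0a]
    exact (ZMod.natCast_eq_natCast_iff _ _ _).mpr this
  have hkpcop : Nat.Coprime k p := by
    rw [Nat.coprime_comm, pp.coprime_iff_not_dvd]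
    intro hdk
    have h0 : ((k : ℕ) : ZMod p) = 0 := (ZMod.natCast_eq_zero_iff k p).mpr hdk
    rw [hkp] at h0
    exact ha0 h0
  have hkmcop : Nat.Coprime k m := by
    have h := (Nat.ModEq.gcd_eq hk2.symm).symm
    simpa [Nat.Coprime] using h
  have hkg : Nat.Coprime k g := by
    rw [← hgm]
    exact Nat.Coprime.mul_right (hkpcop.pow_right e) hkmcop
  refine ⟨k, hkg, ?_⟩
  have hJp : jacobiSym (k : ℤ) p = -1 := by
    rw [← jacobiSym.legendreSym.to_jacobiSym]
    simp only [legendreSym]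
    rw [show (((k : ℤ)) : ZMod p) = a by push_cast; exact hkp]
    exact hA
  have hJm : jacobiSym (k : ℤ) m = 1 := by
    have hmod : (k : ℤ) % m = (1 : ℤ) % m := by
      have h' : k % m = 1 % m := hk2
      have h'' := congrArg (fun z : ℕ => (z : ℤ)) h'
      push_cast at h''
      exact h''
    rw [jacobiSym.mod_left' hmod, jacobiSym.one_left]
  rw [← hgm, jacobiSym.mul_right' _ (pow_ne_zero e pp.pos.ne') hm0,
    jacobiSym.pow_right, hJp, hJm, mul_one]
  exact Odd.neg_one_pow hoddmult

theorem stmt8 (d g r P : ℕ) (t : ℤ) (hd : 0 < d) (hdodd : Odd d) (hg : 0 < g)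
    (hgd : ∀ p : ℕ, p.Prime → p ∣ g → p ∣ d) (hr : 0 < r) (hrd : Nat.gcd r d = 1)
    (hP : P.Prime) (ht : Int.gcd t d = 1)
    (hdvd : (d : ℤ) ^ 2 ∣ (r : ℤ) ^ 2 * t - 4 * (P : ℤ)) :
    (∑ v ∈ Finset.range g,
        jacobiSym (t + (v : ℤ) * (d : ℤ) ^ 2) g *
          jacobiSym (((r : ℤ) ^ 2 * (t + (v : ℤ) * (d : ℤ) ^ 2) - 4 * (P : ℤ)) / (d : ℤ) ^ 2) g) =
      if IsSquare g then (Nat.totient g : ℤ) else 0 := by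
  haveI : NeZero g := ⟨hg.ne'⟩
  have hdz : ((d : ℤ) ^ 2) ≠ 0 := by positivity
  have hgodd : Odd g := by
    refine Nat.not_even_iff_odd.mp fun hev => ?_
    exact (Nat.not_even_iff_odd.mpr hdodd)
      ((even_iff_two_dvd).mpr (hgd 2 Nat.prime_two ((even_iff_two_dvd).mp hev)))
  have hrg : Nat.Coprime r g := by
    by_contra hcon
    obtain ⟨p, pp, hpd⟩ := Nat.exists_prime_and_dvd hcon
    have h1 : p ∣ r := hpd.trans (Nat.gcd_dvd_left _ _)
    have h2 : p ∣ g := hpd.trans (Nat.gcd_dvd_right _ _)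
    have h3 := Nat.dvd_gcd h1 (hgd p pp h2)
    rw [hrd] at h3
    exact pp.one_lt.ne' (Nat.dvd_one.mp h3)
  have htg : Int.gcd t (g : ℤ) = 1 := by
    have htd : Nat.gcd t.natAbs d = 1 := by simpa [Int.gcd] using ht
    show Nat.gcd t.natAbs (g : ℤ).natAbs = 1
    rw [Int.natAbs_natCast]
    by_contra hcon
    obtain ⟨p, pp, hpd⟩ := Nat.exists_prime_and_dvd hcon
    have h1 : p ∣ t.natAbs := hpd.trans (Nat.gcd_dvd_left _ _)
    have h2 : p ∣ g := hpd.trans (Nat.gcd_dvd_right _ _)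
    have h3 := Nat.dvd_gcd h1 (hgd p pp h2)
    rw [htd] at h3
    exact pp.one_lt.ne' (Nat.dvd_one.mp h3)
  set c : ℤ := ((r : ℤ) ^ 2 * t - 4 * (P : ℤ)) / (d : ℤ) ^ 2 with hc
  have hrg2 : Nat.Coprime (r ^ 2) g := Nat.Coprime.pow_left 2 hrg
  set u : (ZMod g)ˣ := ZMod.unitOfCoprime (r ^ 2) hrg2 with hu
  have step1 : ∀ v ∈ Finset.range g,
      jacobiSym (t + (v : ℤ) * (d : ℤ) ^ 2) g *
          jacobiSym (((r : ℤ) ^ 2 * (t + (v : ℤ) * (d : ℤ) ^ 2) - 4 * (P : ℤ)) / (d : ℤ) ^ 2) g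
        = jacobiSym t g *
            (fun x : ZMod g => jacobiSym ((x.val : ℤ)) g)
              ((c : ZMod g) + (u : ZMod g) * ((v : ℕ) : ZMod g)) := by
    intro v _
    have hf1 : jacobiSym (t + (v : ℤ) * (d : ℤ) ^ 2) g = jacobiSym t g := by
      apply jacobi_congr_aux
      intro p pp hpg
      have : (p : ℤ) ∣ (d : ℤ) := Int.natCast_dvd_natCast.mpr (hgd p pp hpg)
      have h2 : (p : ℤ) ∣ (v : ℤ) * (d : ℤ) ^ 2 := this.trans (dvd_pow_self _ two_ne_zero) |>.mul_left _
      simpa using h2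
    have harg : ((r : ℤ) ^ 2 * (t + (v : ℤ) * (d : ℤ) ^ 2) - 4 * (P : ℤ))
        = ((r : ℤ) ^ 2 * t - 4 * (P : ℤ)) + ((r : ℤ) ^ 2 * (v : ℤ)) * (d : ℤ) ^ 2 := by ring
    have hf2 : ((r : ℤ) ^ 2 * (t + (v : ℤ) * (d : ℤ) ^ 2) - 4 * (P : ℤ)) / (d : ℤ) ^ 2
        = c + (r : ℤ) ^ 2 * (v : ℤ) := by
      rw [harg, Int.add_mul_ediv_right _ _ hdz]
    rw [hf1, hf2]
    congr 1
    rw [jacobi_val_cast (c + (r : ℤ) ^ 2 * (v : ℤ))]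
    simp only
    congr 2
    push_cast
    rw [hu, ZMod.coe_unitOfCoprime]
    push_cast
    ring
  rw [Finset.sum_congr rfl step1, ← Finset.mul_sum]
  rw [sum_range_cast (fun x : ZMod g =>
    (fun y : ZMod g => jacobiSym ((y.val : ℤ)) g) ((c : ZMod g) + (u : ZMod g) * x))]
  rw [sum_affine u (c : ZMod g) (fun y : ZMod g => jacobiSym ((y.val : ℤ)) g)]
  by_cases hsq : IsSquare g
  · rw [if_pos hsq, sum_jacobi_of_isSquare hsq,
      jacobi_eq_one_of_isSquare hg hsq htg, one_mul]
  · rw [if_neg hsq]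
    obtain ⟨k, hk, hJ⟩ := exists_jacobi_neg_one hg hgodd hsq
    rw [sum_jacobi_eq_zero_of_exists k hk hJ, mul_zero]
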